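/- If X is a proper metric space with a countable dense subset {x_i}, then the map g : X → ℝ^ℕ (with the product topology) defined by g(x)_i = d(x_i, x) is a closed embedding of X into ℝ^ℕ. -/
import Mathlib

open Topology Filter

/-- If `X` is a proper metric space with a countable dense subset `{x_i}`, then
`g : X → ℝ^ℕ`, `g(x)_i = d(x_i, x)`, is a closed embedding (product topology on `ℝ^ℕ`). -/
theorem stmt1 (X : Type*) [MetricSpace X]
    (hproper : ∀ (x : X) (r : ℝ), IsCompact (Metric.closedBall x r))
    (u : ℕ → X) (hu : DenseRange u) :
    Topology.IsClosedEmbedding (fun x : X => fun i : ℕ => dist (u i) x) := by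
  set g : X → ℕ → ℝ := fun x i => dist (u i) x with hgdef
  have hcont : Continuous g := continuous_pi fun i => continuous_const.dist continuous_id
  have hinj : Function.Injective g := by
    intro x y hxy
    have h : ∀ i, dist (u i) x = dist (u i) y := fun i => congrFun hxy i
    by_contra hne
    have hpos : 0 < dist x y := dist_pos.mpr hne
    obtain ⟨i, hi⟩ := Metric.denseRange_iff.mp hu x (dist x y / 2) (by linarith)
    have : dist x y ≤ dist x (u i) + dist (u i) y := dist_triangle _ _ _
    rw [← h i, dist_comm (u i) x] at this
    linarith
  have hclosed : IsClosedMap g := by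
    intro C hC
    have hseq : IsSeqClosed (g '' C) := by
      intro y f hmem hlim
      choose x hxC hgx using hmem
      have h0 : Tendsto (fun n => dist (u 0) (x n)) atTop (𝓝 (f 0)) := by
        have := tendsto_pi_nhds.mp hlim 0
        convert this using 2 with n
        rw [← hgx n]
      obtain ⟨R, hR⟩ := h0.bddAbove_range
      have hball : ∀ n, x n ∈ Metric.closedBall (u 0) R := by
        intro n
        rw [Metric.mem_closedBall, dist_comm]
        exact hR ⟨n, rfl⟩
      obtain ⟨a, _, φ, hφ, hlima⟩ := (hproper (u 0) R).tendsto_subseq hball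
      have haC : a ∈ C := hC.mem_of_tendsto hlima (Eventually.of_forall fun n => hxC _)
      have h1 : Tendsto (fun n => g (x (φ n))) atTop (𝓝 (g a)) :=
        (hcont.continuousAt.tendsto).comp hlima
      have h2 : Tendsto (fun n => g (x (φ n))) atTop (𝓝 f) := by
        have : Tendsto (fun n => y (φ n)) atTop (𝓝 f) := hlim.comp hφ.tendsto_atTop
        convert this using 2 with n
        rw [hgx]
      exact ⟨a, haC, tendsto_nhds_unique h1 h2⟩
    exact hseq.isClosed
  exact Topology.IsClosedEmbedding.of_continuous_injective_isClosedMap hcont hinj hclosed
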